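/- Let N ≥ 3, let M be an integer with 1 ≤ M < N/2, let d_1,…,d_M ∈ ℝ, and let L be the N×N circulant graph Laplacian with diagonal entries ∑_{j=1}^M 2d_j and entry −d_j at positions (i, i±j mod N). Let k ≥ 1 be an integer with 2kM ≤ N−1. Then for every real polynomial p of degree at most 2k, the vector x ∈ ℝ^N defined by x_i = p(i) for 0 ≤ i ≤ N−1 satisfies (L^k·x)_{i₁} = (L^k·x)_{i₂} for all integers i₁, i₂ with kM ≤ i₁, i₂ ≤ N−1−kM. In particular, for every offset s with 1 ≤ s ≤ M and every i with kM ≤ i and i+s ≤ N−1−kM, the oriented edge difference (L^k·x)_i − (L^k·x)_{i+s} vanishes, i.e. the operator S·L^k annihilates polynomial signals of degree up to 2k away from the wrap-around boundary. -/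

import Mathlib

open Matrix

open Polynomial
open Polynomial

lemma natDegree_shift (p : Polynomial ℝ) (t : ℝ) : (p.comp (X + C t)).natDegree = p.natDegree := by
  rw [natDegree_comp, natDegree_X_add_C, mul_one]

lemma natDegree_diff (p : Polynomial ℝ) (t : ℝ) {n : ℕ} (h : p.natDegree ≤ n + 1) :
    (p.comp (X + C t) - p).natDegree ≤ n := by
  rcases eq_or_ne p 0 with rfl | hp
  · simp
  · have hdeg : (p.comp (X + C t)).degree = p.degree := by
      rw [degree_eq_natDegree (fun h0 => hp (by simpa [comp_eq_zero_iff] using h0)),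
        degree_eq_natDegree hp, natDegree_shift]
    have hlc : (p.comp (X + C t)).leadingCoeff = p.leadingCoeff := by
      rw [leadingCoeff_comp (by simp), leadingCoeff_X_add_C, one_pow, mul_one]
    have hlt : (p.comp (X + C t) - p).degree < p.degree :=
      hdeg ▸ degree_sub_lt hdeg (by simpa [comp_eq_zero_iff] using hp) hlc
    rcases eq_or_ne (p.comp (X + C t) - p) 0 with h0 | h0
    · simp [h0]
    · have := (natDegree_lt_natDegree_iff h0).2 hlt
      omega

lemma comp_shift_unshift (q : Polynomial ℝ) (t : ℝ) : (q.comp (X + C t)).comp (X - C t) = q := by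
  rw [comp_assoc]; simp

lemma secondDiff_eq (p : Polynomial ℝ) (t : ℝ) :
    C 2 * p - p.comp (X + C t) - p.comp (X - C t) =
      -((((p.comp (X + C t) - p).comp (X + C t)) - (p.comp (X + C t) - p)).comp (X - C t)) := by
  simp only [sub_comp, comp_shift_unshift]
  have h2 : (C 2 : Polynomial ℝ) = 2 := by rw [show (2:ℝ) = ((2:ℕ):ℝ) by norm_num, Polynomial.C_eq_natCast]; norm_num
  rw [h2]; ring

lemma natDegree_secondDiff (p : Polynomial ℝ) (t : ℝ) {n : ℕ} (h : p.natDegree ≤ n + 2) :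
    (C 2 * p - p.comp (X + C t) - p.comp (X - C t)).natDegree ≤ n := by
  rw [secondDiff_eq, natDegree_neg]
  have h1 : (p.comp (X + C t) - p).natDegree ≤ n + 1 := natDegree_diff p t h
  have h2 := natDegree_diff (p.comp (X + C t) - p) t h1
  calc ((((p.comp (X + C t) - p).comp (X + C t)) - (p.comp (X + C t) - p)).comp (X - C t)).natDegree
      = _ := by rw [natDegree_comp, natDegree_X_sub_C, mul_one]
    _ ≤ n := h2

noncomputable def Qop (d : ℕ → ℝ) (M : ℕ) (p : Polynomial ℝ) : Polynomial ℝ :=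
  ∑ t ∈ Finset.Icc 1 M, C (d t) * (C 2 * p - p.comp (X + C (t:ℝ)) - p.comp (X - C (t:ℝ)))

lemma natDegree_Qop (d : ℕ → ℝ) (M : ℕ) (p : Polynomial ℝ) {n : ℕ} (h : p.natDegree ≤ n + 2) :
    (Qop d M p).natDegree ≤ n := by
  refine Polynomial.natDegree_sum_le_of_forall_le _ _ (fun t _ => ?_)
  calc (C (d t) * (C 2 * p - p.comp (X + C (t:ℝ)) - p.comp (X - C (t:ℝ)))).natDegree
      ≤ _ := natDegree_mul_le
    _ ≤ n := by simpa using natDegree_secondDiff p (t:ℝ) h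

lemma natDegree_Qop_iter (d : ℕ → ℝ) (M : ℕ) (m : ℕ) (p : Polynomial ℝ) {n : ℕ}
    (h : p.natDegree ≤ n + 2 * m) : ((Qop d M)^[m] p).natDegree ≤ n := by
  induction m generalizing p with
  | zero => simpa using h
  | succ m ih =>
    rw [Function.iterate_succ_apply]
    exact ih _ (natDegree_Qop d M p (by omega))

lemma eval_Qop (d : ℕ → ℝ) (M : ℕ) (p : Polynomial ℝ) (y : ℝ) :
    (Qop d M p).eval y = ∑ t ∈ Finset.Icc 1 M,
      d t * (2 * p.eval y - p.eval (y + t) - p.eval (y - t)) := by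
  simp [Qop, eval_finset_sum, eval_comp]
open Matrix

lemma offmod (N i j : ℕ) (hi : i < N) (hj : j < N) :
    (j + N - i) % N = if i ≤ j then j - i else j + N - i := by
  split_ifs with h
  · have e : j + N - i = (j - i) + N := by omega
    rw [e, Nat.add_mod_right, Nat.mod_eq_of_lt (by omega)]
  · rw [Nat.mod_eq_of_lt (by omega)]

lemma sum_delta {N : ℕ} (v : Fin N → ℝ) (c : ℕ) (hc : c < N) :
    ∑ j : Fin N, (if j.val = c then (1:ℝ) else 0) * v j = v ⟨c, hc⟩ := by
  rw [Finset.sum_eq_single ⟨c, hc⟩]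
  · simp
  · intro b _ hb
    have : b.val ≠ c := fun h => hb (Fin.ext h)
    simp [this]
  · simp

lemma mulVec_interior (N M : ℕ) (hM2 : 2 * M < N) (d : ℕ → ℝ)
    (L : Matrix (Fin N) (Fin N) ℝ)
    (hL : ∀ i j, L i j =
      if i = j then ∑ t ∈ Finset.Icc 1 M, 2 * d t
      else if (j.val + N - i.val) % N ≤ M then -d ((j.val + N - i.val) % N)
      else if (i.val + N - j.val) % N ≤ M then -d ((i.val + N - j.val) % N)
      else 0)
    (i : Fin N) (h1 : M ≤ i.val) (h2 : i.val + M < N)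
    (v : Fin N → ℝ) (w : ℕ → ℝ) (hw : ∀ j : Fin N, v j = w j.val) :
    L.mulVec v i = ∑ t ∈ Finset.Icc 1 M,
      d t * (2 * w i.val - w (i.val - t) - w (i.val + t)) := by
  have hiN : i.val < N := i.isLt
  have key : ∀ j : Fin N, L i j = ∑ t ∈ Finset.Icc 1 M,
      d t * (2 * (if j.val = i.val then (1:ℝ) else 0)
        - (if j.val = i.val - t then (1:ℝ) else 0)
        - (if j.val = i.val + t then (1:ℝ) else 0)) := by
    intro j
    have hjN : j.val < N := j.isLt
    rw [hL]
    rcases eq_or_ne i j with rfl | hij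
    · rw [if_pos rfl]
      refine Finset.sum_congr rfl (fun t ht => ?_) |>.symm
      simp only [Finset.mem_Icc] at ht
      have e1 : i.val ≠ i.val - t := by omega
      have e2 : i.val ≠ i.val + t := by omega
      simp [e1, e2, mul_comm, show t ≠ 0 by omega]
    · rw [if_neg hij]
      have hvij : j.val ≠ i.val := fun h => hij (Fin.ext h.symm)
      rw [offmod N i.val j.val hiN hjN, offmod N j.val i.val hjN hiN]
      have hsum : ∀ (a : ℕ), 1 ≤ a → a ≤ M → j.val = i.val - a →
            (∑ t ∈ Finset.Icc 1 M,
              d t * (2 * (if j.val = i.val then (1:ℝ) else 0)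
                - (if j.val = i.val - t then (1:ℝ) else 0)
                - (if j.val = i.val + t then (1:ℝ) else 0)) = -d a) := by
        intro a ha1 ha2 ha
        rw [Finset.sum_eq_single a]
        · have e2 : j.val ≠ i.val + a := by omega
          simp [hvij, ha, e2, show i.val - a ≠ i.val + a by omega, show i.val - a ≠ i.val by omega]
        · intro t ht htne
          simp only [Finset.mem_Icc] at ht
          have e1 : j.val ≠ i.val - t := by omega
          have e2 : j.val ≠ i.val + t := by omega
          simp [hvij, e1, e2]
        · intro h'; exact absurd (by simp [Finset.mem_Icc]; omega) h'
      have hsum' : ∀ (a : ℕ), 1 ≤ a → a ≤ M → j.val = i.val + a →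
            (∑ t ∈ Finset.Icc 1 M,
              d t * (2 * (if j.val = i.val then (1:ℝ) else 0)
                - (if j.val = i.val - t then (1:ℝ) else 0)
                - (if j.val = i.val + t then (1:ℝ) else 0)) = -d a) := by
        intro a ha1 ha2 ha
        rw [Finset.sum_eq_single a]
        · have e1 : j.val ≠ i.val - a := by omega
          simp [hvij, ha, e1, show i.val + a ≠ i.val - a by omega, show a ≠ 0 by omega]
        · intro t ht htne
          simp only [Finset.mem_Icc] at ht
          have e1 : j.val ≠ i.val - t := by omega
          have e2 : j.val ≠ i.val + t := by omega
          simp [hvij, e1, e2]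
        · intro h'; exact absurd (by simp [Finset.mem_Icc]; omega) h'
      have hzero : (∀ t, 1 ≤ t → t ≤ M → j.val ≠ i.val - t ∧ j.val ≠ i.val + t) →
            (∑ t ∈ Finset.Icc 1 M,
              d t * (2 * (if j.val = i.val then (1:ℝ) else 0)
                - (if j.val = i.val - t then (1:ℝ) else 0)
                - (if j.val = i.val + t then (1:ℝ) else 0)) = 0) := by
        intro h
        refine Finset.sum_eq_zero (fun t ht => ?_)
        simp only [Finset.mem_Icc] at ht
        obtain ⟨e1, e2⟩ := h t ht.1 ht.2
        simp [hvij, e1, e2]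
      rcases Nat.lt_or_ge i.val j.val with hlt | hge
      · -- i < j
        rw [if_pos (by omega : i.val ≤ j.val), if_neg (by omega : ¬ j.val ≤ i.val)]
        by_cases hA : j.val - i.val ≤ M
        · rw [if_pos hA]
          exact (hsum' (j.val - i.val) (by omega) hA (by omega)).symm
        · rw [if_neg hA, if_neg (by omega : ¬ i.val + N - j.val ≤ M)]
          exact (hzero (fun t ht1 ht2 => ⟨by omega, by omega⟩)).symm
      · -- j < i
        have hlt : j.val < i.val := by omega
        rw [if_neg (by omega : ¬ i.val ≤ j.val), if_pos (by omega : j.val ≤ i.val)]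
        rw [if_neg (by omega : ¬ j.val + N - i.val ≤ M)]
        by_cases hB : i.val - j.val ≤ M
        · rw [if_pos hB]
          exact (hsum (i.val - j.val) (by omega) hB (by omega)).symm
        · rw [if_neg hB]
          exact (hzero (fun t ht1 ht2 => ⟨by omega, by omega⟩)).symm
  have expand : L.mulVec v i = ∑ j : Fin N, ∑ t ∈ Finset.Icc 1 M,
      (d t * (2 * (if j.val = i.val then (1:ℝ) else 0)
        - (if j.val = i.val - t then (1:ℝ) else 0)
        - (if j.val = i.val + t then (1:ℝ) else 0))) * v j := by
    unfold mulVec dotProduct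
    exact Finset.sum_congr rfl (fun j _ => by show L i j * v j = _; rw [key j, Finset.sum_mul])
  rw [expand, Finset.sum_comm]
  refine Finset.sum_congr rfl (fun t ht => ?_)
  simp only [Finset.mem_Icc] at ht
  have step : ∀ j : Fin N,
      (d t * (2 * (if j.val = i.val then (1:ℝ) else 0)
        - (if j.val = i.val - t then (1:ℝ) else 0)
        - (if j.val = i.val + t then (1:ℝ) else 0))) * v j
      = d t * (2 * ((if j.val = i.val then (1:ℝ) else 0) * v j)
          - (if j.val = i.val - t then (1:ℝ) else 0) * v j
          - (if j.val = i.val + t then (1:ℝ) else 0) * v j) := fun j => by ring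
  rw [Finset.sum_congr rfl (fun j _ => step j), ← Finset.mul_sum]
  congr 1
  rw [Finset.sum_sub_distrib, Finset.sum_sub_distrib, ← Finset.mul_sum]
  rw [sum_delta v i.val hiN, sum_delta v (i.val - t) (by omega),
    sum_delta v (i.val + t) (by omega), hw, hw, hw]

/-- For the circulant graph Laplacian `L` of bandwidth `M` (weights `d j` at offsets
`±j mod N`, `1 ≤ j ≤ M`) and `k ≥ 1` with `2kM ≤ N-1`, the operator `L^k` maps every
polynomial signal of degree at most `2k` to a vector that is constant on the interior
interval `[kM, N-1-kM]`; in particular the edge differences of `L^k·x` (the operator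
`S·L^k`) vanish there, i.e. `S·L^k` annihilates polynomials of degree up to `2k` away
from the wrap-around boundary. -/
theorem circulant_SLk_annihilates_polynomials
    (N M k : ℕ) (hN : 3 ≤ N) (hM1 : 1 ≤ M) (hM2 : 2 * M < N)
    (hk : 1 ≤ k) (hkM : 2 * k * M ≤ N - 1)
    (d : ℕ → ℝ)
    (L : Matrix (Fin N) (Fin N) ℝ)
    (hL : ∀ i j, L i j =
      if i = j then ∑ t ∈ Finset.Icc 1 M, 2 * d t
      else if (j.val + N - i.val) % N ≤ M then -d ((j.val + N - i.val) % N)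
      else if (i.val + N - j.val) % N ≤ M then -d ((i.val + N - j.val) % N)
      else 0)
    (p : Polynomial ℝ) (hp : p.natDegree ≤ 2 * k)
    (x : Fin N → ℝ) (hx : ∀ i, x i = p.eval ((i.val : ℝ))) :
    ∀ i₁ i₂ : Fin N,
      k * M ≤ i₁.val → i₁.val ≤ N - 1 - k * M →
      k * M ≤ i₂.val → i₂.val ≤ N - 1 - k * M →
      (L ^ k).mulVec x i₁ = (L ^ k).mulVec x i₂ := by
  have key : ∀ m, 2 * m * M ≤ N - 1 → ∀ i : Fin N, m * M ≤ i.val → i.val ≤ N - 1 - m * M →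
      (L ^ m).mulVec x i = ((Qop d M)^[m] p).eval (i.val : ℝ) := by
    intro m
    induction m with
    | zero =>
      intro _ i _ _
      simp [Matrix.one_mulVec, hx i]
    | succ m ih =>
      intro hm i hi1 hi2
      obtain ⟨A, hA⟩ : ∃ A, m * M = A := ⟨_, rfl⟩
      have e2 : 2 * (m + 1) * M = 2 * A + 2 * M := by rw [← hA]; ring
      have e1 : (m + 1) * M = A + M := by rw [← hA]; ring
      have e3 : 2 * m * M = 2 * A := by rw [← hA]; ring
      rw [e2] at hm
      rw [e1] at hi1 hi2
      have hm' : 2 * m * M ≤ N - 1 := by omega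
      set v := (L ^ m).mulVec x with hv
      set wv : ℕ → ℝ := fun n => if h : n < N then v ⟨n, h⟩ else 0 with hwvdef
      have hwv : ∀ j : Fin N, v j = wv j.val := fun j => by
        simp only [hwvdef, j.isLt, dif_pos]
      have hint : ∀ n, A ≤ n → n ≤ N - 1 - A → wv n = ((Qop d M)^[m] p).eval (n : ℝ) := by
        intro n hn1 hn2
        have hnN : n < N := by omega
        have := ih hm' ⟨n, hnN⟩ (by simpa [hA] using hn1) (by simpa [hA, e3] using hn2)
        simpa [hwvdef, hnN, hv] using this
      have hM_le : M ≤ i.val := by omega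
      have hiM : i.val + M < N := by omega
      have hpow : (L ^ (m + 1)).mulVec x i = L.mulVec v i := by
        rw [pow_succ', ← Matrix.mulVec_mulVec, hv]
      rw [hpow, mulVec_interior N M hM2 d L hL i hM_le hiM v wv hwv,
        Function.iterate_succ_apply', eval_Qop]
      refine Finset.sum_congr rfl fun t ht => ?_
      simp only [Finset.mem_Icc] at ht
      rw [hint i.val (by omega) (by omega),
        hint (i.val - t) (by omega) (by omega),
        hint (i.val + t) (by omega) (by omega)]
      have c1 : ((i.val - t : ℕ) : ℝ) = (i.val : ℝ) - (t : ℝ) := by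
        rw [Nat.cast_sub (by omega)]
      have c2 : ((i.val + t : ℕ) : ℝ) = (i.val : ℝ) + (t : ℝ) := by push_cast; ring
      rw [c1, c2]
      ring
  intro i₁ i₂ h1 h2 h3 h4
  obtain ⟨c, hc⟩ : ∃ c, (Qop d M)^[k] p = Polynomial.C c :=
    ⟨_, Polynomial.eq_C_of_natDegree_le_zero (natDegree_Qop_iter d M k p (by omega))⟩
  rw [key k hkM i₁ h1 h2, key k hkM i₂ h3 h4, hc]
  simp
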